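/- Let K be a field of characteristic zero, r ≥ 1, m ≥ 1, and a_1, …, a_m ∈ M_r(K). Let M be the block companion matrix of g(u) = u^m + a_1 u^{m-1} + ⋯ + a_m, and let X = (x_{ij})_{1≤i,j≤m} be any m×m matrix with entries x_{ij} ∈ M_r(K). Then for every integer p ≥ 0, the naive block trace satisfies Tr(X M^p) = Σ_{q=0}^{p} (−1)^q Σ x_{i,i_1} a_{m_1} ⋯ a_{m_q}, where the inner sum runs over all indices with 1 ≤ i, i_1 ≤ m and all q-tuples (m_1, …, m_q) with 1 ≤ m_1, …, m_q ≤ m, subject to m_1 + ⋯ + m_q = p + i − i_1 and (when q ≥ 1) m_1 ≥ m − i_1 + 1; for q = 0 the product a_{m_1}⋯a_{m_q} is the identity and the conditions reduce to i_1 = p + i (with i_1 ≤ m). -/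

import Mathlib

/-- The block companion matrix of the monic polynomial
`g(u) = u^m + a 1 * u^(m-1) + ⋯ + a m` with coefficients in `M_r(K)`:
`M_{i+1,i} = 1` for `1 ≤ i ≤ m-1` (1-based), `M_{i,m} = -a (m+1-i)`, other entries `0`. -/
def blockCompanion {K : Type*} [Field K] (r m : ℕ) (a : ℕ → Matrix (Fin r) (Fin r) K) :
    Matrix (Fin m) (Fin m) (Matrix (Fin r) (Fin r) K) :=
  Matrix.of fun i j =>
    if (j : ℕ) + 1 = m then -a (m - (i : ℕ))
    else if (i : ℕ) = (j : ℕ) + 1 then 1 else 0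


/-- Auxiliary inner sum used in the proof of Lemma 6.2. -/
def auxG {K : Type*} [Field K] {r : ℕ} (m : ℕ) (a : ℕ → Matrix (Fin r) (Fin r) K)
    (i₁ s q : ℕ) : Matrix (Fin r) (Fin r) K :=
  ∑ t : Fin q → Fin m,
    if (∑ k : Fin q, ((t k : ℕ) + 1)) + i₁ = s ∧
        (∀ k : Fin q, (k : ℕ) = 0 → m ≤ (t k : ℕ) + i₁ + 1) then
      (-1 : K) ^ q • (List.ofFn fun k : Fin q => a ((t k : ℕ) + 1)).prod
    else 0

lemma auxG_zero {K : Type*} [Field K] {r : ℕ} (m : ℕ) (a : ℕ → Matrix (Fin r) (Fin r) K)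
    (i₁ s : ℕ) : auxG m a i₁ s 0 = if i₁ = s then 1 else 0 := by
  rw [auxG, Fintype.sum_unique]
  simp

lemma auxG_vanish {K : Type*} [Field K] {r : ℕ} (m : ℕ) (a : ℕ → Matrix (Fin r) (Fin r) K)
    (i₁ s q : ℕ) (hq : 1 ≤ q) (hs : s + 2 ≤ m + q) : auxG m a i₁ s q = 0 := by
  rw [auxG]
  refine Finset.sum_eq_zero fun t _ => ?_
  rw [if_neg]
  rintro ⟨h1, h2⟩
  set k0 : Fin q := ⟨0, hq⟩ with hk0def
  have hk0 := h2 k0 rfl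
  have hcard : (Finset.univ.erase k0).card = q - 1 := by
    rw [Finset.card_erase_of_mem (Finset.mem_univ _), Finset.card_univ, Fintype.card_fin]
  have hle : (q - 1) • 1 ≤ ∑ k ∈ Finset.univ.erase k0, ((t k : ℕ) + 1) := by
    rw [← hcard]
    exact Finset.card_nsmul_le_sum _ _ _ (fun x _ => Nat.le_add_left 1 _)
  have hsplit : ((t k0 : ℕ) + 1) + ∑ k ∈ Finset.univ.erase k0, ((t k : ℕ) + 1)
      = ∑ k : Fin q, ((t k : ℕ) + 1) :=
    Finset.add_sum_erase Finset.univ (fun k => (t k : ℕ) + 1) (Finset.mem_univ _)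
  simp only [smul_eq_mul, mul_one] at hle
  omega

lemma auxG_snoc {K : Type*} [Field K] {r : ℕ} (m : ℕ) (a : ℕ → Matrix (Fin r) (Fin r) K)
    (i₁ s q : ℕ) :
    auxG m a i₁ (s + m) (q + 1)
      = -∑ j : Fin m, auxG m a i₁ (s + (j : ℕ)) q * a (m - (j : ℕ)) := by
  rw [← Finset.sum_neg_distrib,
    ← Equiv.sum_comp (Fin.revPerm (n := m))
      (fun j : Fin m => -(auxG m a i₁ (s + (j : ℕ)) q * a (m - (j : ℕ))))]
  conv_lhs => rw [auxG]
  rw [← Equiv.sum_comp (Fin.snocEquiv (fun _ : Fin (q + 1) => Fin m))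
      (fun t : Fin (q + 1) → Fin m =>
        if (∑ k : Fin (q + 1), ((t k : ℕ) + 1)) + i₁ = s + m ∧
            (∀ k : Fin (q + 1), (k : ℕ) = 0 → m ≤ (t k : ℕ) + i₁ + 1) then
          (-1 : K) ^ (q + 1) • (List.ofFn fun k : Fin (q + 1) => a ((t k : ℕ) + 1)).prod
        else 0),
    Fintype.sum_prod_type]
  refine Finset.sum_congr rfl fun x _ => ?_
  have hxlt : (x : ℕ) < m := x.isLt
  have hx : ((Fin.revPerm x : Fin m) : ℕ) = m - ((x : ℕ) + 1) := by
    rw [Fin.revPerm_apply, Fin.val_rev]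
  have hx2 : m - (m - ((x : ℕ) + 1)) = (x : ℕ) + 1 := by omega
  rw [hx, hx2, auxG, Finset.sum_mul, ← Finset.sum_neg_distrib]
  refine Finset.sum_congr rfl fun y _ => ?_
  simp only [Fin.snocEquiv_apply]
  have hsum : (∑ k : Fin (q + 1), (((Fin.snoc y x : Fin (q + 1) → Fin m) k : ℕ) + 1))
      = (∑ k : Fin q, ((y k : ℕ) + 1)) + ((x : ℕ) + 1) := by
    rw [Fin.sum_univ_castSucc]
    simp
  have hcond : ((∑ k : Fin (q + 1), (((Fin.snoc y x : Fin (q + 1) → Fin m) k : ℕ) + 1)) + i₁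
          = s + m ∧
        (∀ k : Fin (q + 1), (k : ℕ) = 0
          → m ≤ (((Fin.snoc y x : Fin (q + 1) → Fin m) k : ℕ)) + i₁ + 1))
      ↔ ((∑ k : Fin q, ((y k : ℕ) + 1)) + i₁ = s + (m - ((x : ℕ) + 1)) ∧
        (∀ k : Fin q, (k : ℕ) = 0 → m ≤ (y k : ℕ) + i₁ + 1)) := by
    rw [hsum]
    constructor
    · rintro ⟨h1, h2⟩
      refine ⟨by omega, fun k hk => ?_⟩
      have := h2 k.castSucc (by simpa using hk)
      rwa [Fin.snoc_castSucc] at this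
    · rintro ⟨h1, h2⟩
      refine ⟨by omega, fun k hk => ?_⟩
      rcases Nat.eq_zero_or_pos q with hq | hq
      · subst hq
        have hk' : k = Fin.last 0 := Fin.ext (by simp [hk])
        rw [hk', Fin.snoc_last]
        simp only [Finset.univ_eq_empty, Finset.sum_empty] at h1
        omega
      · have hk' : k = Fin.castSucc ⟨0, hq⟩ := Fin.ext (by simpa using hk)
        rw [hk', Fin.snoc_castSucc]
        exact h2 ⟨0, hq⟩ rfl
  by_cases h : (∑ k : Fin q, ((y k : ℕ) + 1)) + i₁ = s + (m - ((x : ℕ) + 1)) ∧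
      (∀ k : Fin q, (k : ℕ) = 0 → m ≤ (y k : ℕ) + i₁ + 1)
  · rw [if_pos (hcond.mpr h), if_pos h]
    rw [List.ofFn_succ']
    simp only [Fin.snoc_castSucc, Fin.snoc_last]
    rw [List.prod_concat, pow_succ, mul_neg_one, neg_smul, smul_mul_assoc]
  · rw [if_neg (fun hc => h (hcond.mp hc)), if_neg h, zero_mul, neg_zero]

lemma blockCompanion_pow_apply {K : Type*} [Field K] {r m : ℕ}
    (a : ℕ → Matrix (Fin r) (Fin r) K) (p : ℕ) (i₁ i : Fin m) :
    (blockCompanion r m a ^ p) i₁ i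
      = ∑ q ∈ Finset.range (p + 1), auxG m a (i₁ : ℕ) (p + (i : ℕ)) q := by
  induction p generalizing i with
  | zero =>
    rw [pow_zero, Finset.sum_range_one, auxG_zero, Matrix.one_apply]
    simp [Fin.ext_iff]
  | succ p ih =>
    rw [pow_succ, Matrix.mul_apply]
    have hM : ∀ j : Fin m, blockCompanion r m a j i
        = if (i : ℕ) + 1 = m then -a (m - (j : ℕ))
          else if (j : ℕ) = (i : ℕ) + 1 then 1 else 0 := fun j => rfl
    by_cases hcol : (i : ℕ) + 1 = m
    · have h1 : ∑ j : Fin m, (blockCompanion r m a ^ p) i₁ j * blockCompanion r m a j i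
          = ∑ q ∈ Finset.range (p + 1), auxG m a (i₁ : ℕ) (p + m) (q + 1) := by
        calc ∑ j : Fin m, (blockCompanion r m a ^ p) i₁ j * blockCompanion r m a j i
            = ∑ j : Fin m, ∑ q ∈ Finset.range (p + 1),
                -(auxG m a (i₁ : ℕ) (p + (j : ℕ)) q * a (m - (j : ℕ))) := by
              refine Finset.sum_congr rfl fun j _ => ?_
              rw [ih, hM j, if_pos hcol, Finset.sum_mul]
              exact Finset.sum_congr rfl fun q _ => (mul_neg _ _)
          _ = ∑ q ∈ Finset.range (p + 1),
                -∑ j : Fin m, auxG m a (i₁ : ℕ) (p + (j : ℕ)) q * a (m - (j : ℕ)) := by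
              rw [Finset.sum_comm]
              exact Finset.sum_congr rfl fun q _ => Finset.sum_neg_distrib _
          _ = ∑ q ∈ Finset.range (p + 1), auxG m a (i₁ : ℕ) (p + m) (q + 1) :=
              Finset.sum_congr rfl fun q _ => (auxG_snoc m a (i₁ : ℕ) p q).symm
      rw [h1, show p + 1 + (i : ℕ) = p + m from by omega,
        Finset.sum_range_succ' (fun q => auxG m a (i₁ : ℕ) (p + m) q) (p + 1),
        auxG_zero, if_neg (by have := i₁.isLt; omega), add_zero]
    · have hlt : (i : ℕ) + 1 < m := by have := i.isLt; omega
      have hstep : ∑ j : Fin m, (blockCompanion r m a ^ p) i₁ j * blockCompanion r m a j i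
          = (blockCompanion r m a ^ p) i₁ ⟨(i : ℕ) + 1, hlt⟩ := by
        rw [Finset.sum_eq_single (⟨(i : ℕ) + 1, hlt⟩ : Fin m)]
        · rw [hM, if_neg hcol, if_pos rfl, mul_one]
        · intro j _ hj
          rw [hM, if_neg hcol, if_neg (fun h => hj (Fin.ext h)), mul_zero]
        · simp
      rw [hstep, ih]
      have hs : p + ((⟨(i : ℕ) + 1, hlt⟩ : Fin m) : ℕ) = p + 1 + (i : ℕ) := by simp; omega
      rw [hs, Finset.sum_range_succ (fun q => auxG m a (i₁ : ℕ) (p + 1 + (i : ℕ)) q) (p + 1),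
        auxG_vanish m a (i₁ : ℕ) (p + 1 + (i : ℕ)) (p + 1) (by omega) (by omega), add_zero]

/-- **Lemma 6.2 of Bloch–Esnault.**
For any `m×m` matrix `Xm` with entries in `M_r(K)` and any `p ≥ 0`,
`Tr(Xm·M^p) = Σ_{q=0}^{p} (−1)^q Σ x_{i,i₁} a_{m₁} ⋯ a_{m_q}`, the inner sum running over
`1 ≤ i, i₁ ≤ m` and tuples `(m₁, …, m_q)` with `1 ≤ m_k ≤ m`, `Σ m_k = p + i − i₁`, and
(when `q ≥ 1`) `m₁ ≥ m − i₁ + 1`.  Here `i, i₁` are 1-based: the row `i` corresponds to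
`(i0 : Fin m)` with `i = i0 + 1`, the index `m_k` to `(t k : Fin m)` with `m_k = t k + 1`,
so the constraints read `Σ (t k + 1) + i₁0 = p + i0` and `m ≤ t 0 + i₁0 + 1`. -/
theorem statement3 {K : Type*} [Field K] [CharZero K] (r m : ℕ) (hr : 1 ≤ r) (hm : 1 ≤ m)
    (a : ℕ → Matrix (Fin r) (Fin r) K)
    (Xm : Matrix (Fin m) (Fin m) (Matrix (Fin r) (Fin r) K)) (p : ℕ) :
    ∑ i : Fin m, (Xm * blockCompanion r m a ^ p) i i =
      ∑ q ∈ Finset.range (p + 1), ∑ i : Fin m, ∑ i₁ : Fin m, ∑ t : Fin q → Fin m,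
        if (∑ k : Fin q, ((t k : ℕ) + 1)) + (i₁ : ℕ) = p + (i : ℕ) ∧
            (∀ k : Fin q, (k : ℕ) = 0 → m ≤ (t k : ℕ) + (i₁ : ℕ) + 1) then
          (-1 : K) ^ q • (Xm i i₁ * (List.ofFn fun k : Fin q => a ((t k : ℕ) + 1)).prod)
        else 0 := by
  calc ∑ i : Fin m, (Xm * blockCompanion r m a ^ p) i i
      = ∑ i : Fin m, ∑ i₁ : Fin m, ∑ q ∈ Finset.range (p + 1), ∑ t : Fin q → Fin m,
          if (∑ k : Fin q, ((t k : ℕ) + 1)) + (i₁ : ℕ) = p + (i : ℕ) ∧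
              (∀ k : Fin q, (k : ℕ) = 0 → m ≤ (t k : ℕ) + (i₁ : ℕ) + 1) then
            (-1 : K) ^ q • (Xm i i₁ * (List.ofFn fun k : Fin q => a ((t k : ℕ) + 1)).prod)
          else 0 := by
        refine Finset.sum_congr rfl fun i _ => ?_
        rw [Matrix.mul_apply]
        refine Finset.sum_congr rfl fun i₁ _ => ?_
        rw [blockCompanion_pow_apply, Finset.mul_sum]
        refine Finset.sum_congr rfl fun q _ => ?_
        rw [auxG, Finset.mul_sum]
        refine Finset.sum_congr rfl fun t _ => ?_
        rw [mul_ite, mul_zero, mul_smul_comm]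
    _ = ∑ i : Fin m, ∑ q ∈ Finset.range (p + 1), ∑ i₁ : Fin m, ∑ t : Fin q → Fin m,
          if (∑ k : Fin q, ((t k : ℕ) + 1)) + (i₁ : ℕ) = p + (i : ℕ) ∧
              (∀ k : Fin q, (k : ℕ) = 0 → m ≤ (t k : ℕ) + (i₁ : ℕ) + 1) then
            (-1 : K) ^ q • (Xm i i₁ * (List.ofFn fun k : Fin q => a ((t k : ℕ) + 1)).prod)
          else 0 :=
        Finset.sum_congr rfl fun i _ => Finset.sum_comm
    _ = _ := Finset.sum_comm
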